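/- Let 0 < δ < 1, set α = 1 − exp(−1/δ) and β = (1+α)/(2α), and define h(z) = −δ·Log(1 − αz), where Log denotes the principal branch of the complex logarithm. Then for every z ∈ ℂ with |z| ≤ β one has 1 − αz ≠ 0, and moreover −δ·log 2 ≤ Re h(z) ≤ 1 + δ·log 2 and |Im h(z)| ≤ (π/2)·δ. -/

import Mathlib

/-- Properties of `h(z) = -δ Log(1 - αz)` with `α = 1 - e^{-1/δ}` and `β = (1+α)/(2α)`:
on the disk `|z| ≤ β` one has `1 - αz ≠ 0`, `-δ log 2 ≤ Re h(z) ≤ 1 + δ log 2`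
and `|Im h(z)| ≤ (π/2)δ`. -/
theorem log_map_disk_to_strip (δ : ℝ) (hδ0 : 0 < δ) (hδ1 : δ < 1) (z : ℂ)
    (hz : ‖z‖ ≤
      (1 + (1 - Real.exp (-(1 / δ)))) / (2 * (1 - Real.exp (-(1 / δ))))) :
    1 - ((1 - Real.exp (-(1 / δ)) : ℝ) : ℂ) * z ≠ 0 ∧
    -(δ * Real.log 2) ≤
      (-(δ : ℂ) * Complex.log (1 - ((1 - Real.exp (-(1 / δ)) : ℝ) : ℂ) * z)).re ∧
    (-(δ : ℂ) * Complex.log (1 - ((1 - Real.exp (-(1 / δ)) : ℝ) : ℂ) * z)).re ≤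
      1 + δ * Real.log 2 ∧
    |(-(δ : ℂ) * Complex.log (1 - ((1 - Real.exp (-(1 / δ)) : ℝ) : ℂ) * z)).im| ≤
      Real.pi / 2 * δ := by
  set a : ℝ := 1 - Real.exp (-(1 / δ)) with ha
  have hexp0 : 0 < Real.exp (-(1 / δ)) := Real.exp_pos _
  have hexp1 : Real.exp (-(1 / δ)) < 1 := Real.exp_lt_one_iff.mpr (neg_lt_zero.mpr (by positivity))
  have ha0 : 0 < a := by rw [ha]; linarith
  have ha1 : a < 1 := by rw [ha]; linarith
  set w : ℂ := 1 - (a : ℂ) * z with hw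
  have haz : a * ‖z‖ ≤ (1 + a) / 2 := by
    have := mul_le_mul_of_nonneg_left hz ha0.le
    calc a * ‖z‖ ≤ a * ((1 + a) / (2 * a)) := this
      _ = (1 + a) / 2 := by field_simp
  have habsre : z.re ≤ ‖z‖ := (Complex.abs_re_le_norm z).trans' (le_abs_self _)
  have hrew : w.re = 1 - a * z.re := by simp [hw]
  have hrepos : (1 - a) / 2 ≤ w.re := by
    rw [hrew]
    have : a * z.re ≤ (1 + a) / 2 :=
      le_trans (mul_le_mul_of_nonneg_left habsre ha0.le) haz
    linarith
  have hwne : w ≠ 0 := by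
    intro h
    rw [h] at hrepos
    simp at hrepos
    linarith
  have habs_le : ‖w‖ ≤ 2 := by
    calc ‖w‖ ≤ ‖(1 : ℂ)‖ + ‖(a : ℂ) * z‖ := by
          simpa [hw, sub_eq_add_neg] using norm_add_le (1 : ℂ) (-((a : ℂ) * z))
      _ = 1 + a * ‖z‖ := by
          simp [norm_mul, Complex.norm_real, Real.norm_eq_abs, abs_of_pos ha0]
      _ ≤ 1 + (1 + a) / 2 := by linarith
      _ ≤ 2 := by linarith
  have habs_ge : (1 - a) / 2 ≤ ‖w‖ := hrepos.trans (Complex.re_le_norm w)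
  have habs_pos : 0 < ‖w‖ := lt_of_lt_of_le (by linarith) habs_ge
  have hre : (-(δ : ℂ) * Complex.log w).re = -δ * Real.log (‖w‖) := by
    simp [Complex.mul_re, Complex.log_re]
  have him : (-(δ : ℂ) * Complex.log w).im = -δ * Complex.arg w := by
    simp [Complex.mul_im, Complex.log_im]
  refine ⟨hwne, ?_, ?_, ?_⟩
  · rw [hre]
    have hlog : Real.log (‖w‖) ≤ Real.log 2 :=
      Real.log_le_log habs_pos habs_le
    nlinarith
  · rw [hre]
    have hlog : Real.log ((1 - a) / 2) ≤ Real.log (‖w‖) :=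
      Real.log_le_log (by linarith) habs_ge
    have : Real.log ((1 - a) / 2) = -(1 / δ) - Real.log 2 := by
      rw [show (1 - a) = Real.exp (-(1 / δ)) by simp [ha],
        Real.log_div (Real.exp_ne_zero _) two_ne_zero, Real.log_exp]
    rw [this] at hlog
    have h1 : -δ * Real.log (‖w‖) ≤ -δ * (-(1 / δ) - Real.log 2) := by
      nlinarith
    have h2 : -δ * (-(1 / δ) - Real.log 2) = 1 + δ * Real.log 2 := by
      field_simp
      ring
    linarith
  · rw [him, abs_mul, abs_neg, abs_of_pos hδ0]
    have harg : |Complex.arg w| ≤ Real.pi / 2 :=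
      Complex.abs_arg_le_pi_div_two_iff.mpr (by linarith)
    nlinarith [Real.pi_pos]
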